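/- arXiv:2105.14545 — 2 statements merged into one kernel-verified Lean document; each statement's English description precedes it below -/
import Mathlib

section
/- Let U and Γ be n×n Hermitian positive semidefinite complex matrices. Then log det(I + U) − Re(tr U) + Re(tr((I + U)·Γ·(I + Γ)⁻¹)) ≤ log det(I + Γ), with equality if and only if U = Γ. (Here det(I + U) and det(I + Γ) are positive reals, so the logarithms are well defined.) -/
open Matrix ComplexOrder

lemma aux_conj_posDef {n : ℕ} {A N : Matrix (Fin n) (Fin n) ℂ} (hA : A.PosDef)
    (hN : IsUnit N.det) : (Nᴴ * A * N).PosDef := by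
  refine Matrix.PosDef.of_dotProduct_mulVec_pos (isHermitian_conjTranspose_mul_mul N hA.1) fun x hx => ?_
  have hNx : N *ᵥ x ≠ 0 := by
    intro h
    apply hx
    have := congrArg (fun v => N⁻¹ *ᵥ v) h
    simpa [Matrix.mulVec_mulVec, Matrix.nonsing_inv_mul _ hN] using this
  simpa only [star_mulVec, dotProduct_mulVec, vecMul_vecMul] using hA.dotProduct_mulVec_pos hNx

lemma aux_trace_eq_sum_eigenvalues {n : ℕ} {M : Matrix (Fin n) (Fin n) ℂ}
    (hM : M.IsHermitian) : M.trace = ∑ i, (hM.eigenvalues i : ℂ) := by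
  conv_lhs => rw [hM.spectral_theorem, Unitary.conjStarAlgAut_apply]
  rw [Matrix.trace_mul_cycle,
    Matrix.mem_unitaryGroup_iff'.mp (Matrix.IsHermitian.eigenvectorUnitary hM).2, one_mul,
    Matrix.trace_diagonal]
  rfl

lemma aux_eq_one_of_eigenvalues {n : ℕ} {M : Matrix (Fin n) (Fin n) ℂ}
    (hM : M.IsHermitian) (h : ∀ i, hM.eigenvalues i = 1) : M = 1 := by
  have hd : Matrix.diagonal (RCLike.ofReal ∘ hM.eigenvalues) = (1 : Matrix (Fin n) (Fin n) ℂ) := by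
    have hfun : (RCLike.ofReal ∘ hM.eigenvalues) = fun _ : Fin n => (1 : ℂ) :=
      funext fun i => by simp [h i]
    rw [hfun, ← Matrix.diagonal_one]
  conv_lhs => rw [hM.spectral_theorem, Unitary.conjStarAlgAut_apply]
  rw [hd, mul_one, Matrix.mem_unitaryGroup_iff.mp (Matrix.IsHermitian.eigenvectorUnitary hM).2]

/-- Matrix version of the Lagrangian dual transform (Proposition 1): for Hermitian
positive semidefinite `U` and `Γ`,
`log det (I + U) - Re (tr U) + Re (tr ((I + U) * Γ * (I + Γ)⁻¹)) ≤ log det (I + Γ)`,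
with equality iff `U = Γ`.  The determinants `det (I + U)` and `det (I + Γ)` are
positive reals, so we take the real logarithm of their real parts. -/
theorem stmt_5 (n : ℕ) (U Γ : Matrix (Fin n) (Fin n) ℂ)
    (hU : U.PosSemidef) (hΓ : Γ.PosSemidef) :
    (Real.log ((1 + U).det.re) - (U.trace).re
        + (((1 + U) * Γ * (1 + Γ)⁻¹).trace).re ≤ Real.log ((1 + Γ).det.re)) ∧
    (Real.log ((1 + U).det.re) - (U.trace).re
        + (((1 + U) * Γ * (1 + Γ)⁻¹).trace).re = Real.log ((1 + Γ).det.re) ↔ U = Γ) := by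
  classical
  set A : Matrix (Fin n) (Fin n) ℂ := 1 + U with hAdef
  set B : Matrix (Fin n) (Fin n) ℂ := 1 + Γ with hBdef
  have hA : A.PosDef := Matrix.PosDef.one.add_posSemidef hU
  have hB : B.PosDef := Matrix.PosDef.one.add_posSemidef hΓ
  have hBdet : IsUnit B.det := hB.isUnit.map (Matrix.detMonoidHom)
  obtain ⟨S, hSh, hSS⟩ : ∃ S : Matrix (Fin n) (Fin n) ℂ, S.IsHermitian ∧ S * S = B := by
    open scoped MatrixOrder in
    exact ⟨CFC.sqrt B, (CFC.sqrt_nonneg B).posSemidef.1, CFC.sqrt_mul_sqrt_self B hB.posSemidef.nonneg⟩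
  have hSdet : IsUnit S.det := by
    have h2 : S.det * S.det = B.det := by rw [← Matrix.det_mul, hSS]
    have : S.det ≠ 0 := fun h => by simp [h] at h2; exact hBdet.ne_zero h2.symm
    exact isUnit_iff_ne_zero.mpr this
  have hSinvh : S⁻¹.IsHermitian := hSh.inv
  set C : Matrix (Fin n) (Fin n) ℂ := S⁻¹ * A * S⁻¹ with hCdef
  have hC : C.PosDef := by
    have := aux_conj_posDef hA (Matrix.isUnit_nonsing_inv_det S hSdet)
    rwa [hSinvh.eq] at this
  set ev : Fin n → ℝ := hC.1.eigenvalues with hevdef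
  have hev : ∀ i, 0 < ev i := fun i => hC.eigenvalues_pos i
  -- B⁻¹ = S⁻¹ * S⁻¹
  have hBinv : B⁻¹ = S⁻¹ * S⁻¹ := by rw [← hSS, Matrix.mul_inv_rev]
  -- trace C = trace (A * B⁻¹)
  have htrC : C.trace = (A * B⁻¹).trace := by
    rw [hBinv, hCdef, Matrix.trace_mul_cycle, ← Matrix.mul_assoc, Matrix.trace_mul_comm, ← Matrix.mul_assoc]
  -- det relation
  have hdetC : C.det * B.det = A.det := by
    have hSinv : S⁻¹.det * S.det = 1 := Matrix.det_nonsing_inv_mul_det S hSdet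
    have h2 : C.det * B.det = (S⁻¹.det * S.det) ^ 2 * A.det := by
      rw [hCdef, ← hSS, Matrix.det_mul, Matrix.det_mul, Matrix.det_mul]
      ring
    rw [h2, hSinv, one_pow, one_mul]
  -- trace of the main product
  have htr_main : (A * Γ * B⁻¹).trace = A.trace - (A * B⁻¹).trace := by
    have hΓB : Γ * B⁻¹ = 1 - B⁻¹ := by
      have h1 : Γ = B - 1 := by rw [hBdef]; abel
      rw [h1, Matrix.sub_mul, Matrix.one_mul, Matrix.mul_nonsing_inv _ hBdet]
    rw [Matrix.mul_assoc, hΓB, Matrix.mul_sub, Matrix.mul_one, Matrix.trace_sub]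
  have htrA : A.trace = (n : ℂ) + U.trace := by
    rw [hAdef, Matrix.trace_add, Matrix.trace_one]
    norm_num
  -- real parts
  have htrC_re : ((A * B⁻¹).trace).re = ∑ i, ev i := by
    rw [← htrC, aux_trace_eq_sum_eigenvalues hC.1]
    simp [Complex.re_sum]
    rfl
  have haC : C.det = ((∏ i, ev i : ℝ) : ℂ) := by
    rw [hC.1.det_eq_prod_eigenvalues]
    push_cast
    rfl
  set a : ℝ := A.det.re with hadef
  set b : ℝ := B.det.re with hbdef
  have haA : (a : ℂ) = A.det := by
    have := hA.det_pos
    rw [Complex.lt_def] at this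
    exact Complex.ext rfl (by simp [hadef, ← this.2])
  have hbB : (b : ℂ) = B.det := by
    have := hB.det_pos
    rw [Complex.lt_def] at this
    exact Complex.ext rfl (by simp [hbdef, ← this.2])
  have ha : 0 < a := by
    have := hA.det_pos; rw [Complex.lt_def] at this; simpa using this.1
  have hb : 0 < b := by
    have := hB.det_pos; rw [Complex.lt_def] at this; simpa using this.1
  have hab : a = (∏ i, ev i) * b := by
    have : ((a : ℂ)) = (((∏ i, ev i) * b : ℝ) : ℂ) := by
      rw [haA, ← hdetC, haC, ← hbB]; push_cast; ring
    exact_mod_cast this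
  have hloga : Real.log a = (∑ i, Real.log (ev i)) + Real.log b := by
    rw [hab, Real.log_mul (Finset.prod_pos (fun i _ => hev i)).ne' hb.ne', Real.log_prod]
    intro i _
    exact (hev i).ne'
  -- key rewriting of the LHS
  have hkey : Real.log (A.det.re) - U.trace.re + ((A * Γ * B⁻¹).trace).re
      = Real.log b + ∑ i, (Real.log (ev i) + 1 - ev i) := by
    rw [htr_main, Complex.sub_re, htrA, htrC_re, Complex.add_re]
    simp only [← hadef, hloga]
    rw [Finset.sum_sub_distrib, Finset.sum_add_distrib]
    simp [Finset.card_univ]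
    ring
  have hterm : ∀ i, Real.log (ev i) + 1 - ev i ≤ 0 := fun i => by
    have := Real.log_le_sub_one_of_pos (hev i)
    linarith
  constructor
  · rw [hkey]
    have : (∑ i, (Real.log (ev i) + 1 - ev i)) ≤ 0 :=
      Finset.sum_nonpos fun i _ => hterm i
    linarith
  · constructor
    · intro heq
      rw [hkey] at heq
      have hsum0 : (∑ i, (Real.log (ev i) + 1 - ev i)) = 0 := by linarith
      have hall : ∀ i ∈ Finset.univ, Real.log (ev i) + 1 - ev i = 0 :=
        (Finset.sum_eq_zero_iff_of_nonpos (fun i _ => hterm i)).mp hsum0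
      have hev1 : ∀ i, ev i = 1 := by
        intro i
        by_contra h
        have := Real.log_lt_sub_one_of_pos (hev i) h
        have h0 := hall i (Finset.mem_univ i)
        linarith
      have hC1 : C = 1 := aux_eq_one_of_eigenvalues hC.1 hev1
      have hAB : A = B := by
        have : S * C * S = A := by
          rw [hCdef, ← Matrix.mul_assoc, ← Matrix.mul_assoc,
            Matrix.mul_nonsing_inv _ hSdet, Matrix.one_mul, Matrix.mul_assoc,
            Matrix.nonsing_inv_mul _ hSdet, Matrix.mul_one]
        rw [hC1, Matrix.mul_one, hSS] at this
        exact this.symm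
      have : (1 : Matrix (Fin n) (Fin n) ℂ) + U = 1 + Γ := hAB
      exact add_left_cancel this
    · rintro rfl
      have hAB : A = B := rfl
      have htr : (A * U * B⁻¹).trace = U.trace := by
        rw [hAB, Matrix.trace_mul_cycle, Matrix.nonsing_inv_mul _ hBdet, Matrix.one_mul]
      rw [htr]
      have habeq : a = b := rfl
      rw [habeq]
      ring
end

section
/- Let V be an n×n Hermitian positive definite complex matrix, and let S and L be n×m complex matrices. Then 2·Re(tr(Lᴴ S)) − Re(tr(Lᴴ V L)) ≤ Re(tr(Sᴴ V⁻¹ S)), with equality if and only if L = V⁻¹ S. -/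
open Matrix ComplexOrder

lemma aux_trace (n m : ℕ) (V : Matrix (Fin n) (Fin n) ℂ) (hV : V.PosDef)
    (D : Matrix (Fin n) (Fin m) ℂ) :
    0 ≤ ((Dᴴ * V * D).trace).re ∧ (((Dᴴ * V * D).trace).re = 0 ↔ D = 0) := by
  have hterm : ∀ j, (Dᴴ * V * D) j j
      = star (fun i => D i j) ⬝ᵥ V *ᵥ (fun i => D i j) := by
    intro j
    simp only [Matrix.mul_apply, Matrix.mulVec, dotProduct, conjTranspose_apply,
      Finset.sum_mul, Finset.mul_sum, Pi.star_apply, RCLike.star_def]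
    rw [Finset.sum_comm]
    congr 1; ext i; congr 1; ext k; ring
  have htr : ((Dᴴ * V * D).trace).re
      = ∑ j, (star (fun i => D i j) ⬝ᵥ V *ᵥ (fun i => D i j)).re := by
    rw [Matrix.trace, Complex.re_sum]
    exact Finset.sum_congr rfl fun j _ => by rw [diag_apply, hterm j]
  have hnn : ∀ j, 0 ≤ (star (fun i => D i j) ⬝ᵥ V *ᵥ (fun i => D i j)).re := by
    intro j
    have := hV.posSemidef.dotProduct_mulVec_nonneg (fun i => D i j)
    exact (Complex.le_def.mp this).1
  constructor
  · rw [htr]; exact Finset.sum_nonneg fun j _ => hnn j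
  · constructor
    · intro h
      rw [htr] at h
      have hz := (Finset.sum_eq_zero_iff_of_nonneg (fun j _ => hnn j)).mp h
      ext i j
      by_contra hne
      have hcol : (fun i => D i j) ≠ 0 := by
        intro hc; exact hne (by simpa using congrFun hc i)
      have := hV.dotProduct_mulVec_pos hcol
      have := (Complex.lt_def.mp this).1
      simp only [Complex.zero_re] at this
      exact this.ne (hz j (Finset.mem_univ j)).symm |>.elim
    · rintro rfl; simp

/-- Matrix version of the fractional programming (quadratic) transform (Proposition 2):
for Hermitian positive definite `V` and matrices `S`, `L`,
`2 Re (tr (Lᴴ S)) - Re (tr (Lᴴ V L)) ≤ Re (tr (Sᴴ V⁻¹ S))`, with equality iff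
`L = V⁻¹ S`. -/
theorem stmt_6 (n m : ℕ) (V : Matrix (Fin n) (Fin n) ℂ) (hV : V.PosDef)
    (S L : Matrix (Fin n) (Fin m) ℂ) :
    (2 * ((Lᴴ * S).trace).re - ((Lᴴ * V * L).trace).re ≤ ((Sᴴ * V⁻¹ * S).trace).re) ∧
    (2 * ((Lᴴ * S).trace).re - ((Lᴴ * V * L).trace).re = ((Sᴴ * V⁻¹ * S).trace).re ↔
      L = V⁻¹ * S) := by
  have hVinv : V⁻¹.IsHermitian := hV.1.inv
  have hu : IsUnit V.det := hV.det_pos.ne'.isUnit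
  have h1 : V * V⁻¹ = 1 := mul_nonsing_inv V hu
  have h2 : V⁻¹ * V = 1 := nonsing_inv_mul V hu
  set D := L - V⁻¹ * S with hD
  have hexp : Dᴴ * V * D = Lᴴ * V * L - Lᴴ * S - Sᴴ * L + Sᴴ * V⁻¹ * S := by
    have hDH : Dᴴ = Lᴴ - Sᴴ * V⁻¹ := by
      rw [hD, conjTranspose_sub, conjTranspose_mul, hVinv.eq]
    rw [hDH, hD]
    simp only [Matrix.sub_mul, Matrix.mul_sub]
    have e1 : Lᴴ * V * (V⁻¹ * S) = Lᴴ * S := by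
      rw [Matrix.mul_assoc Lᴴ V, ← Matrix.mul_assoc V, h1, Matrix.one_mul]
    have e2 : Sᴴ * V⁻¹ * V = Sᴴ := by
      rw [Matrix.mul_assoc, h2, Matrix.mul_one]
    have e3 : Sᴴ * V⁻¹ * V * (V⁻¹ * S) = Sᴴ * V⁻¹ * S := by
      rw [e2, ← Matrix.mul_assoc]
    rw [e1, e3, e2]
    abel
  have hre : ((Sᴴ * L).trace).re = ((Lᴴ * S).trace).re := by
    have : Sᴴ * L = (Lᴴ * S)ᴴ := by simp [conjTranspose_mul]
    rw [this, trace_conjTranspose]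
    simp
  have hkey : ((Dᴴ * V * D).trace).re
      = ((Lᴴ * V * L).trace).re - 2 * ((Lᴴ * S).trace).re + ((Sᴴ * V⁻¹ * S).trace).re := by
    rw [hexp, trace_add, trace_sub, trace_sub]
    simp only [Complex.add_re, Complex.sub_re, hre]
    ring
  obtain ⟨hnn, hzero⟩ := aux_trace n m V hV D
  constructor
  · linarith
  · constructor
    · intro h
      have : ((Dᴴ * V * D).trace).re = 0 := by linarith
      have hD0 := hzero.mp this
      have : L - V⁻¹ * S = 0 := hD0
      exact sub_eq_zero.mp this
    · intro h
      have hD0 : D = 0 := by rw [hD, h, sub_self]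
      have := hzero.mpr hD0
      linarith
end
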